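/- Let α₁, α₂ > 0 and T₀ > 0, let 𝕌 ⊆ ℝ^m, define ℓ(x,u) = (α₁ g(x)ᵀH_x(x) − α₂ T₀ g(x)ᵀS_x(x))ᵀ u, and define 𝒮 = {(x̄, ū) ∈ 𝒯 × 𝕌 : g(x̄) ū = −J₀(x̄) H_x(x̄)}. Then: (i) every (x̂, û) ∈ 𝒮 is a steady state of the RIPHS (i.e., (J₀(x̂) + Σ_k γ_k(x̂){S,H}_{J_k}(x̂) J_k) H_x(x̂) + g(x̂)û = 0) with ℓ(x̂, û) = 0; (ii) conversely, every steady state (x̄, ū) ∈ 𝕏 × 𝕌 with ℓ(x̄, ū) = 0 belongs to 𝒮. Consequently, if 𝒮 ≠ ∅, then the minimum of ℓ over steady states in 𝕏 × 𝕌 is 0 and 𝒮 equals the set of minimizers. -/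

import Mathlib

open Set Matrix

/-- Matrix–vector multiplication on Euclidean space. -/
noncomputable def mv {a b : ℕ} (A : Matrix (Fin a) (Fin b) ℝ)
    (x : EuclideanSpace ℝ (Fin b)) : EuclideanSpace ℝ (Fin a) :=
  Matrix.toEuclideanLin A x

/-- The Poisson bracket `{S,H}_J(x) = S_x(x)ᵀ J H_x(x)`, evaluated at given gradients. -/
noncomputable def bracket {n : ℕ} (J : Matrix (Fin n) (Fin n) ℝ)
    (Sx Hx : EuclideanSpace ℝ (Fin n)) : ℝ :=
  inner ℝ Sx (mv J Hx)

/-- The stage cost `ℓ(x,u) = (α₁ g(x)ᵀH_x(x) − α₂T₀ g(x)ᵀS_x(x))ᵀ u`. -/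
noncomputable def stageCost {n m : ℕ} (α₁ α₂ T₀ : ℝ)
    (g : EuclideanSpace ℝ (Fin n) → Matrix (Fin n) (Fin m) ℝ)
    (Hx Sx : EuclideanSpace ℝ (Fin n) → EuclideanSpace ℝ (Fin n))
    (p : EuclideanSpace ℝ (Fin n)) (w : EuclideanSpace ℝ (Fin m)) : ℝ :=
  inner ℝ (α₁ • mv (g p)ᵀ (Hx p) - (α₂ * T₀) • mv (g p)ᵀ (Sx p)) w


lemma mv_add' {a b : ℕ} (A B : Matrix (Fin a) (Fin b) ℝ) (x : EuclideanSpace ℝ (Fin b)) :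
    mv (A + B) x = mv A x + mv B x := by
  simp [mv, map_add]

lemma mv_sum' {a b ι : ℕ} (M : Fin ι → Matrix (Fin a) (Fin b) ℝ) (x : EuclideanSpace ℝ (Fin b)) :
    mv (∑ k, M k) x = ∑ k, mv (M k) x := by
  simp [mv, map_sum]

lemma mv_smul' {a b : ℕ} (c : ℝ) (A : Matrix (Fin a) (Fin b) ℝ) (x : EuclideanSpace ℝ (Fin b)) :
    mv (c • A) x = c • mv A x := by
  simp [mv, _root_.map_smul]

lemma mv_zero' {a b : ℕ} (x : EuclideanSpace ℝ (Fin b)) :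
    mv (0 : Matrix (Fin a) (Fin b) ℝ) x = 0 := by
  simp [mv]

lemma mv_neg' {a b : ℕ} (A : Matrix (Fin a) (Fin b) ℝ) (x : EuclideanSpace ℝ (Fin b)) :
    mv (-A) x = -(mv A x) := by
  simp [mv, map_neg]

lemma inner_mv_transpose {a b : ℕ} (A : Matrix (Fin a) (Fin b) ℝ)
    (x : EuclideanSpace ℝ (Fin a)) (y : EuclideanSpace ℝ (Fin b)) :
    (inner ℝ (mv Aᵀ x) y : ℝ) = inner ℝ x (mv A y) := by
  have h : Aᵀ = Aᴴ := by
    ext i j; simp [Matrix.conjTranspose_apply]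
  rw [mv, mv, h, Matrix.toEuclideanLin_conjTranspose_eq_adjoint,
    LinearMap.adjoint_inner_left]

lemma skew_inner_self {a : ℕ} (A : Matrix (Fin a) (Fin a) ℝ) (hA : Aᵀ = -A)
    (x : EuclideanSpace ℝ (Fin a)) : (inner ℝ x (mv A x) : ℝ) = 0 := by
  have h1 : (inner ℝ (mv Aᵀ x) x : ℝ) = inner ℝ x (mv A x) := inner_mv_transpose A x x
  rw [hA, mv_neg', inner_neg_left, real_inner_comm] at h1
  linarith

/-- Characterization of optimal steady states: every element of
`𝒮 = {(x̄,ū) ∈ 𝒯 × 𝕌 : g(x̄)ū = −J₀(x̄)H_x(x̄)}` is a steady state with zero stage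
cost; conversely every steady state in `𝕏 × 𝕌` with zero stage cost lies in `𝒮`;
consequently, if `𝒮 ≠ ∅`, the minimum of `ℓ` over steady states in `𝕏 × 𝕌` is `0`
and `𝒮` equals the set of minimizers. -/
theorem optimal_steady_states
    (n N m : ℕ)
    (X : Set (EuclideanSpace ℝ (Fin n))) (hXopen : IsOpen X)
    (J0 : EuclideanSpace ℝ (Fin n) → Matrix (Fin n) (Fin n) ℝ)
    (hJ0cont : ContinuousOn J0 X)
    (hJ0skew : ∀ p ∈ X, (J0 p)ᵀ = -(J0 p))
    (H : EuclideanSpace ℝ (Fin n) → ℝ)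
    (Hx : EuclideanSpace ℝ (Fin n) → EuclideanSpace ℝ (Fin n))
    (hH : ∀ p ∈ X, HasGradientAt H (Hx p) p)
    (hHxcont : ContinuousOn Hx X)
    (S : EuclideanSpace ℝ (Fin n) → ℝ)
    (Sx : EuclideanSpace ℝ (Fin n) → EuclideanSpace ℝ (Fin n))
    (hS : ∀ p ∈ X, HasGradientAt S (Sx p) p)
    (hSxcont : ContinuousOn Sx X)
    (hCasimir : ∀ p ∈ X, mv (J0 p) (Sx p) = 0)
    (J : Fin N → Matrix (Fin n) (Fin n) ℝ)
    (hJskew : ∀ k, (J k)ᵀ = -(J k))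
    (γ : Fin N → EuclideanSpace ℝ (Fin n) → ℝ)
    (hγpos : ∀ k, ∀ p ∈ X, 0 < γ k p)
    (hγcont : ∀ k, ContinuousOn (γ k) X)
    (g : EuclideanSpace ℝ (Fin n) → Matrix (Fin n) (Fin m) ℝ)
    (hgcont : ContinuousOn g X)
    (U : Set (EuclideanSpace ℝ (Fin m)))
    (α₁ α₂ T₀ : ℝ) (hα₁ : 0 < α₁) (hα₂ : 0 < α₂) (hT₀ : 0 < T₀)
    -- the set 𝒮 ⊆ 𝒯 × 𝕌
    (𝒮 : Set (EuclideanSpace ℝ (Fin n) × EuclideanSpace ℝ (Fin m)))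
    (h𝒮 : 𝒮 = {q | (q.1 ∈ X ∧ ∀ k, bracket (J k) (Sx q.1) (Hx q.1) = 0) ∧ q.2 ∈ U ∧
        mv (g q.1) q.2 = -(mv (J0 q.1) (Hx q.1))})
    -- the steady-state predicate
    (Steady : EuclideanSpace ℝ (Fin n) → EuclideanSpace ℝ (Fin m) → Prop)
    (hSteady : ∀ p w, Steady p w ↔
      mv (J0 p + ∑ k, (γ k p * bracket (J k) (Sx p) (Hx p)) • J k) (Hx p)
        + mv (g p) w = 0) :
    -- (i) every element of 𝒮 is a steady state with zero stage cost
    (∀ q ∈ 𝒮, Steady q.1 q.2 ∧ stageCost α₁ α₂ T₀ g Hx Sx q.1 q.2 = 0)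
    -- (ii) every steady state in 𝕏 × 𝕌 with zero stage cost belongs to 𝒮
    ∧ (∀ xbar ∈ X, ∀ ubar ∈ U, Steady xbar ubar →
        stageCost α₁ α₂ T₀ g Hx Sx xbar ubar = 0 → (xbar, ubar) ∈ 𝒮)
    -- consequently: if 𝒮 ≠ ∅, the minimal steady-state cost is 0 and 𝒮 is the set of minimizers
    ∧ (𝒮.Nonempty →
        IsLeast {c : ℝ | ∃ xbar ∈ X, ∃ ubar ∈ U, Steady xbar ubar ∧
            c = stageCost α₁ α₂ T₀ g Hx Sx xbar ubar} 0
        ∧ 𝒮 = {q | q.1 ∈ X ∧ q.2 ∈ U ∧ Steady q.1 q.2 ∧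
            stageCost α₁ α₂ T₀ g Hx Sx q.1 q.2 = 0}) := by
  -- expanded stage cost
  have costeq : ∀ p w, stageCost α₁ α₂ T₀ g Hx Sx p w
      = α₁ * inner ℝ (Hx p) (mv (g p) w) - α₂ * T₀ * inner ℝ (Sx p) (mv (g p) w) := by
    intro p w
    simp only [stageCost, inner_sub_left, real_inner_smul_left, inner_mv_transpose]
  -- Casimir consequence
  have hSJ0 : ∀ p ∈ X, (inner ℝ (Sx p) (mv (J0 p) (Hx p)) : ℝ) = 0 := by
    intro p hp
    have h1 : (inner ℝ (mv (J0 p)ᵀ (Sx p)) (Hx p) : ℝ) = inner ℝ (Sx p) (mv (J0 p) (Hx p)) :=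
      inner_mv_transpose _ _ _
    rw [hJ0skew p hp, mv_neg', hCasimir p hp] at h1
    simpa using h1.symm
  have hHJ0 : ∀ p ∈ X, (inner ℝ (Hx p) (mv (J0 p) (Hx p)) : ℝ) = 0 := fun p hp =>
    skew_inner_self _ (hJ0skew p hp) _
  have hHJk : ∀ (k : Fin N) p, (inner ℝ (Hx p) (mv (J k) (Hx p)) : ℝ) = 0 := fun k p =>
    skew_inner_self _ (hJskew k) _
  -- steady states: cost formula
  have costSteady : ∀ p ∈ X, ∀ w, Steady p w →
      stageCost α₁ α₂ T₀ g Hx Sx p w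
        = α₂ * T₀ * ∑ k, γ k p * (bracket (J k) (Sx p) (Hx p))^2 := by
    intro p hp w hst
    rw [hSteady] at hst
    rw [mv_add', mv_sum'] at hst
    have hgw : mv (g p) w
        = -(mv (J0 p) (Hx p)) - ∑ k, (γ k p * bracket (J k) (Sx p) (Hx p)) • mv (J k) (Hx p) := by
      have := eq_neg_of_add_eq_zero_right hst
      rw [this]
      simp only [mv_smul']
      abel
    rw [costeq, hgw]
    simp only [inner_sub_right, inner_neg_right, inner_sum, real_inner_smul_right,
      hHJ0 p hp, hSJ0 p hp, hHJk]
    have : ∀ k : Fin N, γ k p * bracket (J k) (Sx p) (Hx p) * inner ℝ (Sx p) (mv (J k) (Hx p))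
        = γ k p * (bracket (J k) (Sx p) (Hx p))^2 := by
      intro k
      simp only [bracket]
      ring
    simp only [this]
    simp
  -- part (i)
  have part1 : ∀ q ∈ 𝒮, Steady q.1 q.2 ∧ stageCost α₁ α₂ T₀ g Hx Sx q.1 q.2 = 0 := by
    intro q hq
    rw [h𝒮] at hq
    obtain ⟨⟨hX, hbr⟩, hU, heq⟩ := hq
    have hst : Steady q.1 q.2 := by
      rw [hSteady, mv_add', mv_sum']
      have hz : ∀ k : Fin N,
          mv ((γ k q.1 * bracket (J k) (Sx q.1) (Hx q.1)) • J k) (Hx q.1) = 0 := by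
        intro k; rw [hbr k, mul_zero, zero_smul]; exact mv_zero' _
      simp only [hz, Finset.sum_const_zero, add_zero, heq]
      abel
    refine ⟨hst, ?_⟩
    rw [costSteady q.1 hX q.2 hst]
    have : ∀ k : Fin N, γ k q.1 * (bracket (J k) (Sx q.1) (Hx q.1))^2 = 0 := by
      intro k; rw [hbr k]; ring
    simp [this]
  -- part (ii)
  have part2 : ∀ xbar ∈ X, ∀ ubar ∈ U, Steady xbar ubar →
      stageCost α₁ α₂ T₀ g Hx Sx xbar ubar = 0 → (xbar, ubar) ∈ 𝒮 := by
    intro p hp w hw hst hcost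
    rw [costSteady p hp w hst] at hcost
    have hsum : ∑ k, γ k p * (bracket (J k) (Sx p) (Hx p))^2 = 0 := by
      have hpos : (0:ℝ) < α₂ * T₀ := mul_pos hα₂ hT₀
      exact (mul_eq_zero.mp hcost).resolve_left (ne_of_gt hpos)
    have hterm : ∀ k ∈ Finset.univ, γ k p * (bracket (J k) (Sx p) (Hx p))^2 = 0 := by
      apply (Finset.sum_eq_zero_iff_of_nonneg ?_).mp hsum
      intro k _
      exact mul_nonneg (hγpos k p hp).le (sq_nonneg _)
    have hbr : ∀ k, bracket (J k) (Sx p) (Hx p) = 0 := by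
      intro k
      have := hterm k (Finset.mem_univ k)
      rcases mul_eq_zero.mp this with h | h
      · exact absurd h (ne_of_gt (hγpos k p hp))
      · exact pow_eq_zero_iff (by norm_num) |>.mp h
    rw [h𝒮]
    refine ⟨⟨hp, hbr⟩, hw, ?_⟩
    rw [hSteady, mv_add', mv_sum'] at hst
    have hz : ∀ k : Fin N,
        mv ((γ k p * bracket (J k) (Sx p) (Hx p)) • J k) (Hx p) = 0 := by
      intro k; rw [hbr k, mul_zero, zero_smul]; exact mv_zero' _
    simp only [hz, Finset.sum_const_zero, add_zero] at hst
    exact eq_neg_of_add_eq_zero_right hst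
  refine ⟨part1, part2, ?_⟩
  rintro ⟨q, hq⟩
  obtain ⟨hstq, hcostq⟩ := part1 q hq
  have hqmem := hq
  rw [h𝒮] at hqmem
  obtain ⟨⟨hXq, _⟩, hUq, _⟩ := hqmem
  constructor
  · constructor
    · exact ⟨q.1, hXq, q.2, hUq, hstq, hcostq.symm⟩
    · rintro c ⟨p, hp, w, hw, hst, rfl⟩
      rw [costSteady p hp w hst]
      apply mul_nonneg (mul_nonneg hα₂.le hT₀.le)
      apply Finset.sum_nonneg
      intro k _
      exact mul_nonneg (hγpos k p hp).le (sq_nonneg _)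
  · ext r
    constructor
    · intro hr
      have hrmem := hr
      rw [h𝒮] at hrmem
      obtain ⟨⟨hXr, _⟩, hUr, _⟩ := hrmem
      obtain ⟨h1, h2⟩ := part1 r hr
      exact ⟨hXr, hUr, h1, h2⟩
    · rintro ⟨h1, h2, h3, h4⟩
      exact part2 r.1 h1 r.2 h2 h3 h4
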